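/- A graph G is k-connected if and only if it is v-divided k-connected; that is, the v-divided connectivity κ_d(G) equals the usual vertex connectivity κ(G). -/

import Mathlib

/-- `H` (with projection `π`) is the graph obtained from `G` by vertex-splitting every
vertex of `S` into two vertices (each splitting the neighbourhood): `π` is a graph map,
it induces a bijection between the edge sets, fibers over vertices of `S` have exactly
two elements and all other fibers are singletons. -/
def IsVSplit {V W : Type} [DecidableEq V] [Fintype V] [Fintype W] (G : SimpleGraph V)
    (H : SimpleGraph W) (π : W → V) (S : Finset V) : Prop :=
  (∀ a b, H.Adj a b → G.Adj (π a) (π b)) ∧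
  Set.BijOn (Sym2.map π) H.edgeSet G.edgeSet ∧
  (∀ v : V, Set.ncard {w : W | π w = v} = if v ∈ S then 2 else 1)

/-- Splitting some set of `k` vertices of `G` disconnects it, with every component of the
split graph containing a vertex that did not arise from the split set. -/
def VSplitDisconnects {V : Type} [DecidableEq V] [Fintype V] (G : SimpleGraph V) (k : ℕ) : Prop :=
  ∃ S : Finset V, S.card = k ∧
    ∃ (H : SimpleGraph (V ⊕ Fin k)) (π : V ⊕ Fin k → V),
      IsVSplit G H π S ∧
      (∃ a b : V ⊕ Fin k, ¬ H.Reachable a b) ∧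
      (∀ a : V ⊕ Fin k, ∃ b, π b ∉ S ∧ H.Reachable a b)

/-- The v-divided connectivity `κ_d`. -/
noncomputable def vDividedConn {V : Type} [DecidableEq V] [Fintype V] (G : SimpleGraph V) : ℕ :=
  sInf {k | VSplitDisconnects G k}

/-- The usual vertex connectivity `κ`: the least size of a vertex set whose deletion
leaves two vertices in different components. -/
noncomputable def kappa {V : Type} [Fintype V] (G : SimpleGraph V) : ℕ :=
  sInf {k | ∃ S : Finset V, S.card = k ∧
    ∃ a b : {v : V // v ∉ S},
      ¬ (SimpleGraph.comap (Subtype.val : {v : V // v ∉ S} → V) G).Reachable a b}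

open SimpleGraph

section Aux

set_option linter.unusedSectionVars false

variable {V : Type} [DecidableEq V] [Fintype V] (G : SimpleGraph V)

noncomputable def splitPi (S : Finset V) : V ⊕ Fin S.card → V :=
  Sum.elim id fun i => ((S.equivFin.symm i : S) : V)

open Classical in
noncomputable def splitLift (S : Finset V) (A : Set V) (u v : V) : V ⊕ Fin S.card :=
  if hu : u ∈ S then
    (if v ∉ S ∧ v ∈ A then Sum.inl u else Sum.inr (S.equivFin ⟨u, hu⟩))
  else Sum.inl u

lemma splitPi_lift (S : Finset V) (A : Set V) (u v : V) :
    splitPi S (splitLift S A u v) = u := by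
  unfold splitPi splitLift
  split_ifs <;> simp

noncomputable def splitGraph (S : Finset V) (A : Set V) : SimpleGraph (V ⊕ Fin S.card) where
  Adj x y := ∃ u v, G.Adj u v ∧ x = splitLift S A u v ∧ y = splitLift S A v u
  symm := by constructor; rintro x y ⟨u, v, h, hx, hy⟩; exact ⟨v, u, h.symm, hy, hx⟩
  loopless := by
    constructor
    rintro x ⟨u, v, h, hx, hy⟩
    apply h.ne
    rw [← splitPi_lift S A u v, ← hx, hy, splitPi_lift]

lemma splitPi_fiber (S : Finset V) (v : V) :
    Set.ncard {w : V ⊕ Fin S.card | splitPi S w = v} = if v ∈ S then 2 else 1 := by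
  split_ifs with hv
  · have he : {w : V ⊕ Fin S.card | splitPi S w = v} =
        {Sum.inl v, Sum.inr (S.equivFin ⟨v, hv⟩)} := by
      ext w
      cases w with
      | inl u => simp [splitPi]
      | inr i =>
        simp only [splitPi, Sum.elim_inr, Set.mem_setOf_eq, Set.mem_insert_iff,
          Set.mem_singleton_iff]
        constructor
        · intro h
          right
          have h2 : S.equivFin.symm i = ⟨v, hv⟩ := Subtype.ext h
          rw [← h2, Equiv.apply_symm_apply]
        · rintro (h | h)
          · exact absurd h (by simp)
          · obtain ⟨rfl⟩ := Sum.inr.inj h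
            simp
    rw [he, Set.ncard_pair (by simp)]
  · have he : {w : V ⊕ Fin S.card | splitPi S w = v} = {Sum.inl v} := by
      ext w
      cases w with
      | inl u => simp [splitPi]
      | inr i =>
        simp only [splitPi, Sum.elim_inr, Set.mem_setOf_eq, Set.mem_singleton_iff]
        constructor
        · intro h; exact absurd (h ▸ (S.equivFin.symm i).2) hv
        · intro h; exact absurd h (by simp)
    rw [he, Set.ncard_singleton]

end Aux

section Main

set_option linter.unusedSectionVars false

variable {V : Type} [DecidableEq V] [Fintype V] (G : SimpleGraph V)

lemma split_of_cut (S : Finset V) (A : Set V)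
    (hAS : ∀ v ∈ A, v ∉ S)
    (hclose : ∀ u v, u ∈ A → v ∉ S → G.Adj u v → v ∈ A)
    (a b : V) (haA : a ∈ A) (hbA : b ∉ A) (hbS : b ∉ S)
    (hnb : ∀ s ∈ S, (∃ w, w ∉ S ∧ w ∈ A ∧ G.Adj s w) ∧ (∃ w, w ∉ S ∧ w ∉ A ∧ G.Adj s w)) :
    VSplitDisconnects G S.card := by
  classical
  refine ⟨S, rfl, splitGraph G S A, splitPi S, ⟨?_, ⟨?_, ?_, ?_⟩, ?_⟩, ?_, ?_⟩
  · rintro x y ⟨u, v, h, rfl, rfl⟩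
    rw [splitPi_lift, splitPi_lift]
    exact h
  · -- MapsTo
    intro e he
    induction e using Sym2.ind with
    | _ x y =>
      rw [SimpleGraph.mem_edgeSet] at he
      obtain ⟨u, v, h, rfl, rfl⟩ := he
      simp only [Sym2.map_pair_eq, splitPi_lift, SimpleGraph.mem_edgeSet]
      exact h
  · -- InjOn
    intro e1 he1 e2 he2 heq
    induction e1 using Sym2.ind with
    | _ x1 y1 =>
    induction e2 using Sym2.ind with
    | _ x2 y2 =>
      rw [SimpleGraph.mem_edgeSet] at he1 he2
      obtain ⟨u1, v1, h1, rfl, rfl⟩ := he1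
      obtain ⟨u2, v2, h2, rfl, rfl⟩ := he2
      simp only [Sym2.map_pair_eq, splitPi_lift] at heq
      rcases Sym2.eq_iff.mp heq with ⟨rfl, rfl⟩ | ⟨rfl, rfl⟩
      · rfl
      · exact Sym2.eq_swap
  · -- SurjOn
    intro e he
    induction e using Sym2.ind with
    | _ u v =>
      rw [SimpleGraph.mem_edgeSet] at he
      refine ⟨s(splitLift S A u v, splitLift S A v u), ?_, ?_⟩
      · rw [SimpleGraph.mem_edgeSet]
        exact ⟨u, v, he, rfl, rfl⟩
      · simp only [Sym2.map_pair_eq, splitPi_lift]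
  · exact splitPi_fiber S
  · -- disconnected
    have step : ∀ x y, (splitGraph G S A).Adj x y →
        ((Sum.elim (fun v => v ∈ A ∨ v ∈ S) (fun _ => False) x : Prop) ↔
         (Sum.elim (fun v => v ∈ A ∨ v ∈ S) (fun _ => False) y : Prop)) := by
      rintro x y ⟨u, v, h, rfl, rfl⟩
      by_cases hu : u ∈ S <;> by_cases hv : v ∈ S
      · simp [splitLift, hu, hv]
      · by_cases hvA : v ∈ A
        · simp [splitLift, hu, hv, hvA]
        · simp [splitLift, hu, hv, hvA]
      · by_cases huA : u ∈ A
        · simp [splitLift, hu, hv, huA]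
        · simp [splitLift, hu, hv, huA]
      · by_cases huA : u ∈ A <;> by_cases hvA : v ∈ A
        · simp [splitLift, hu, hv, huA, hvA]
        · exact absurd (hclose u v huA hv h) hvA
        · exact absurd (hclose v u hvA hu h.symm) huA
        · simp [splitLift, hu, hv, huA, hvA]
    have reach : ∀ x y, (splitGraph G S A).Reachable x y →
        ((Sum.elim (fun v => v ∈ A ∨ v ∈ S) (fun _ => False) x : Prop) ↔
         (Sum.elim (fun v => v ∈ A ∨ v ∈ S) (fun _ => False) y : Prop)) := by
      rintro x y ⟨w⟩
      induction w with
      | nil => exact Iff.rfl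
      | cons h p ih => exact (step _ _ h).trans ih
    refine ⟨Sum.inl a, Sum.inl b, fun hr => ?_⟩
    have := (reach _ _ hr).mp (by simp [haA])
    simp only [Sum.elim_inl] at this
    rcases this with h | h
    · exact hbA h
    · exact hbS h
  · -- every component has a vertex outside S
    rintro (v | i)
    · by_cases hv : v ∈ S
      · obtain ⟨w, hwS, hwA, hadj⟩ := (hnb v hv).1
        have h1 : splitLift S A v w = Sum.inl v := by simp [splitLift, hv, hwS, hwA]
        have h2 : splitLift S A w v = Sum.inl w := by simp [splitLift, hwS]
        refine ⟨Sum.inl w, by simpa [splitPi] using hwS, ?_⟩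
        exact SimpleGraph.Adj.reachable ⟨v, w, hadj, h1.symm, h2.symm⟩
      · exact ⟨Sum.inl v, by simpa [splitPi] using hv, SimpleGraph.Reachable.refl _⟩
    · set s : V := ((S.equivFin.symm i : S) : V) with hs_def
      have hs : s ∈ S := (S.equivFin.symm i).2
      obtain ⟨w, hwS, hwA, hadj⟩ := (hnb s hs).2
      have h1 : splitLift S A s w = Sum.inr i := by
        simp only [splitLift, dif_pos hs, if_neg (by tauto : ¬(w ∉ S ∧ w ∈ A))]
        congr 1
        have h2 : (⟨s, hs⟩ : {x // x ∈ S}) = S.equivFin.symm i := Subtype.ext rfl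
        rw [h2, Equiv.apply_symm_apply]
      have h2 : splitLift S A w s = Sum.inl w := by simp [splitLift, hwS]
      refine ⟨Sum.inl w, by simpa [splitPi] using hwS, ?_⟩
      exact SimpleGraph.Adj.reachable ⟨s, w, hadj, h1.symm, h2.symm⟩


lemma cut_of_split (k : ℕ) (h : VSplitDisconnects G k) :
    ∃ S : Finset V, S.card = k ∧ ∃ a b : {v : V // v ∉ S},
      ¬ (SimpleGraph.comap (Subtype.val : {v : V // v ∉ S} → V) G).Reachable a b := by
  classical
  obtain ⟨S, hS, H, π, ⟨hhom, hbij, hfib⟩, ⟨a₀, b₀, hab⟩, hcomp⟩ := h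
  obtain ⟨a', haS, har⟩ := hcomp a₀
  obtain ⟨b', hbS, hbr⟩ := hcomp b₀
  have huniq : ∀ v : V, v ∉ S → ∀ w w' : V ⊕ Fin k, π w = v → π w' = v → w = w' := by
    intro v hv w w' hw hw'
    have h1 := hfib v
    rw [if_neg hv] at h1
    obtain ⟨x, hx⟩ := Set.ncard_eq_one.mp h1
    have e1 : w ∈ {w | π w = v} := hw
    have e2 : w' ∈ {w | π w = v} := hw'
    rw [hx, Set.mem_singleton_iff] at e1 e2
    rw [e1, e2]
  have key : ∀ (x y : {v : V // v ∉ S})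
      (w : (SimpleGraph.comap (Subtype.val : {v : V // v ∉ S} → V) G).Walk x y),
      ∀ x' y' : V ⊕ Fin k, π x' = ↑x → π y' = ↑y → H.Reachable x' y' := by
    intro x y w
    induction w with
    | @nil u =>
      intro x' y' hx hy
      rw [huniq _ u.2 x' y' hx hy]
    | @cons x z y hadj p ih =>
      intro x' y' hx hy
      have hedge : s(↑x, ↑z) ∈ G.edgeSet := hadj
      obtain ⟨e, he, hmape⟩ := hbij.2.2 hedge
      revert he hmape
      induction e using Sym2.ind with
      | _ p q =>
        intro he hmape
        rw [SimpleGraph.mem_edgeSet] at he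
        rw [Sym2.map_pair_eq] at hmape
        rcases Sym2.eq_iff.mp hmape with ⟨hp, hq⟩ | ⟨hp, hq⟩
        · have : x' = p := huniq _ x.2 x' p hx hp
          exact this ▸ (he.reachable.trans (ih q y' hq hy))
        · have : x' = q := huniq _ x.2 x' q hx hq
          exact this ▸ (he.symm.reachable.trans (ih p y' hp hy))
  refine ⟨S, hS, ⟨π a', haS⟩, ⟨π b', hbS⟩, fun hr => ?_⟩
  obtain ⟨w⟩ := hr
  exact hab (har.trans ((key _ _ w a' b' rfl rfl).trans hbr.symm))

end Main

theorem vDividedConn_eq_kappa {V : Type} [DecidableEq V] [Fintype V] (G : SimpleGraph V)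
    (hG : G.Connected) : vDividedConn G = kappa G := by
  classical
  set KS := {k | ∃ S : Finset V, S.card = k ∧
    ∃ a b : {v : V // v ∉ S},
      ¬ (SimpleGraph.comap (Subtype.val : {v : V // v ∉ S} → V) G).Reachable a b} with hKS
  have hkrfl : kappa G = sInf KS := rfl
  by_cases hne : KS.Nonempty
  · have hk : kappa G ∈ KS := hkrfl ▸ Nat.sInf_mem hne
    obtain ⟨S, hScard, a, b, hab⟩ := hk
    set A : Set V := {v : V | ∃ h : v ∉ S,
      (SimpleGraph.comap (Subtype.val : {v : V // v ∉ S} → V) G).Reachable a ⟨v, h⟩} with hA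
    have hAS : ∀ v ∈ A, v ∉ S := fun v hv => hv.choose
    have haA : ↑a ∈ A := ⟨a.2, by obtain ⟨v, hv⟩ := a; exact SimpleGraph.Reachable.refl _⟩
    have hbA : ↑b ∉ A := by
      rintro ⟨h, hr⟩
      exact hab ((Subtype.ext rfl : (⟨↑b, h⟩ : {v : V // v ∉ S}) = b) ▸ hr)
    have hclose : ∀ u v, u ∈ A → v ∉ S → G.Adj u v → v ∈ A := by
      rintro u v ⟨huS, hr⟩ hv hadj
      exact ⟨hv, hr.trans (SimpleGraph.Adj.reachable
        (by exact hadj : (SimpleGraph.comap (Subtype.val : {v : V // v ∉ S} → V) G).Adj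
          ⟨u, huS⟩ ⟨v, hv⟩))⟩
    have hpos : 0 < kappa G := by
      by_contra h0
      push_neg at h0
      interval_cases h : kappa G
      · have hSe : S = ∅ := Finset.card_eq_zero.mp (by omega)
        subst hSe
        refine hab ?_
        have hre := SimpleGraph.Reachable.map
          (⟨fun v => ⟨v, Finset.notMem_empty v⟩, fun {u v} h => h⟩ :
            G →g (SimpleGraph.comap (Subtype.val : {v : V // v ∉ (∅ : Finset V)} → V) G))
          (hG.preconnected ↑a ↑b)
        convert hre using 1 <;> exact Subtype.ext rfl
    have hnb : ∀ s ∈ S, (∃ w, w ∉ S ∧ w ∈ A ∧ G.Adj s w) ∧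
        (∃ w, w ∉ S ∧ w ∉ A ∧ G.Adj s w) := by
      intro s hs
      constructor
      · by_contra hno
        push_neg at hno
        have ha' : ↑a ∉ S.erase s := fun h => a.2 (Finset.mem_of_mem_erase h)
        have hb' : ↑b ∉ S.erase s := fun h => b.2 (Finset.mem_of_mem_erase h)
        have inv : ∀ (x y : {v : V // v ∉ S.erase s})
            (w : (SimpleGraph.comap (Subtype.val : {v : V // v ∉ S.erase s} → V) G).Walk x y),
            ↑x ∈ A → ↑y ∈ A := by
          intro x y w
          induction w with
          | nil => exact id
          | @cons x z y hadj p ih =>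
            intro hx
            apply ih
            have hadj' : G.Adj ↑x ↑z := hadj
            by_cases hz : (z : V) = s
            · rw [hz] at hadj'
              exact absurd hadj'.symm (hno ↑x (hAS _ hx) hx)
            · have hzS : (z : V) ∉ S := fun hzin => z.2 (Finset.mem_erase.mpr ⟨hz, hzin⟩)
              exact hclose ↑x ↑z hx hzS hadj'
        have hmem : (kappa G - 1) ∈ KS := by
          refine ⟨S.erase s, by rw [Finset.card_erase_of_mem hs, hScard], ⟨↑a, ha'⟩, ⟨↑b, hb'⟩,
            fun hr => ?_⟩
          obtain ⟨w⟩ := hr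
          exact hbA (inv _ _ w haA)
        have := Nat.sInf_le hmem
        omega
      · by_contra hno
        push_neg at hno
        have ha' : ↑a ∉ S.erase s := fun h => a.2 (Finset.mem_of_mem_erase h)
        have hb' : ↑b ∉ S.erase s := fun h => b.2 (Finset.mem_of_mem_erase h)
        have inv : ∀ (x y : {v : V // v ∉ S.erase s})
            (w : (SimpleGraph.comap (Subtype.val : {v : V // v ∉ S.erase s} → V) G).Walk x y),
            (↑x ∈ A ∨ (x : V) = s) → (↑y ∈ A ∨ (y : V) = s) := by
          intro x y w
          induction w with
          | nil => exact id
          | @cons x z y hadj p ih =>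
            intro hx
            apply ih
            have hadj' : G.Adj ↑x ↑z := hadj
            by_cases hz : (z : V) = s
            · exact Or.inr hz
            · have hzS : (z : V) ∉ S := fun hzin => z.2 (Finset.mem_erase.mpr ⟨hz, hzin⟩)
              rcases hx with hx | hx
              · exact Or.inl (hclose ↑x ↑z hx hzS hadj')
              · rw [hx] at hadj'
                by_contra hzA
                push_neg at hzA
                exact hno ↑z hzS (fun hc => hzA.1 hc) hadj'
        have hmem : (kappa G - 1) ∈ KS := by
          refine ⟨S.erase s, by rw [Finset.card_erase_of_mem hs, hScard], ⟨↑a, ha'⟩, ⟨↑b, hb'⟩,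
            fun hr => ?_⟩
          obtain ⟨w⟩ := hr
          rcases inv _ _ w (Or.inl haA) with h | h
          · exact hbA h
          · exact b.2 (h ▸ hs)
        have := Nat.sInf_le hmem
        omega
    have hsplit : VSplitDisconnects G S.card :=
      split_of_cut G S A hAS hclose ↑a ↑b haA hbA b.2 hnb
    have hsp2 : VSplitDisconnects G (kappa G) := hScard ▸ hsplit
    have le1 : vDividedConn G ≤ kappa G := Nat.sInf_le hsp2
    have hne2 : {k | VSplitDisconnects G k}.Nonempty := ⟨_, hsp2⟩
    have hm : VSplitDisconnects G (vDividedConn G) := Nat.sInf_mem hne2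
    obtain ⟨S2, hS2, a2, b2, hab2⟩ := cut_of_split G _ hm
    have le2 : kappa G ≤ vDividedConn G := by
      rw [hkrfl]
      exact Nat.sInf_le ⟨S2, hS2, a2, b2, hab2⟩
    omega
  · have h1 : kappa G = 0 := by
      rw [hkrfl, Set.not_nonempty_iff_eq_empty.mp hne, Nat.sInf_empty]
    have h2 : {k | VSplitDisconnects G k} = ∅ := by
      rw [Set.eq_empty_iff_forall_notMem]
      intro k hk
      exact hne ⟨k, cut_of_split G k hk⟩
    show sInf {k | VSplitDisconnects G k} = kappa G
    rw [h2, Nat.sInf_empty, h1]
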